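/- The tensor product of irreducible graded sl2-representations satisfies the graded Clebsch-Gordan rule: V_{λ1}^{w1} ⊗ V_{λ2}^{w2} ≅ ⊕_{i=0}^{min(λ1,λ2)} V_{λ1+λ2-2i}^{w1+w2+i}. -/

import Mathlib

set_option linter.unusedSectionVars false
set_option linter.unusedTactic false
set_option maxHeartbeats 2000000

variable {K V : Type*} [Field K] [AddCommGroup V] [Module K V]

/-- An sl2-triple of linear endomorphisms: [h,e]=2e, [h,f]=-2f, [e,f]=h. -/
def Sl2Rel (e h f : Module.End K V) : Prop :=
  h * e - e * h = 2 • e ∧ h * f - f * h = -(2 • f) ∧ e * f - f * e = h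

/-- A submodule invariant under the sl2-action. -/
def Sl2Inv (e h f : Module.End K V) (W : Submodule K V) : Prop :=
  (∀ x ∈ W, e x ∈ W) ∧ (∀ x ∈ W, h x ∈ W) ∧ (∀ x ∈ W, f x ∈ W)

/-- A Z/2Z-grading V = V0 ⊕ V1 compatible with the graded sl2 (h even, e and f odd). -/
def Sl2Grading (e h f : Module.End K V) (V0 V1 : Submodule K V) : Prop :=
  IsCompl V0 V1 ∧ (∀ x ∈ V0, h x ∈ V0) ∧ (∀ x ∈ V1, h x ∈ V1) ∧
    (∀ x ∈ V0, e x ∈ V1) ∧ (∀ x ∈ V1, e x ∈ V0) ∧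
    (∀ x ∈ V0, f x ∈ V1) ∧ (∀ x ∈ V1, f x ∈ V0)

/-- A submodule which is graded with respect to the grading (V0, V1). -/
def Sl2GradedSub (V0 V1 W : Submodule K V) : Prop :=
  W = (W ⊓ V0) ⊔ (W ⊓ V1)

section General
variable {M : Type*} [CharZero K] [AddCommGroup M] [Module K M]
variable {e h f : Module.End K M}

theorem hf_apply (hrel : Sl2Rel e h f) (x : M) : h (f x) = f (h x) - (2:K) • f x := by
  have := LinearMap.ext_iff.mp hrel.2.1 x
  simp only [LinearMap.sub_apply, LinearMap.neg_apply, LinearMap.smul_apply,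
    Module.End.mul_apply] at this
  rw [sub_eq_iff_eq_add] at this
  rw [this]
  match_scalars <;> push_cast <;> ring

theorem he_apply (hrel : Sl2Rel e h f) (x : M) : h (e x) = e (h x) + (2:K) • e x := by
  have := LinearMap.ext_iff.mp hrel.1 x
  simp only [LinearMap.sub_apply, LinearMap.smul_apply, Module.End.mul_apply] at this
  rw [sub_eq_iff_eq_add] at this
  rw [this]
  match_scalars <;> push_cast <;> ring

theorem ef_apply (hrel : Sl2Rel e h f) (x : M) : e (f x) = f (e x) + h x := by
  have := LinearMap.ext_iff.mp hrel.2.2 x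
  simp only [LinearMap.sub_apply, Module.End.mul_apply] at this
  rw [sub_eq_iff_eq_add] at this
  rw [this]; abel

variable {u : M} {μ : K}

theorem sl2_h_fpow (hrel : Sl2Rel e h f) (huh : h u = μ • u) (k : ℕ) :
    h ((f^k) u) = (μ - 2*(k:K)) • (f^k) u := by
  induction k with
  | zero => simpa using huh
  | succ k ih =>
    rw [pow_succ', Module.End.mul_apply, hf_apply hrel, ih]
    rw [map_smul, ← Module.End.mul_apply f (f^k), ← pow_succ']
    match_scalars; push_cast; ring

theorem sl2_e_fpow (hrel : Sl2Rel e h f) (hue : e u = 0) (huh : h u = μ • u) (k : ℕ) :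
    e ((f^(k+1)) u) = (((k:K)+1) * (μ - (k:K))) • (f^k) u := by
  induction k with
  | zero =>
    rw [pow_one, ef_apply hrel, hue, map_zero, zero_add, huh, pow_zero, Module.End.one_apply]
    match_scalars; push_cast; ring
  | succ k ih =>
    rw [pow_succ', Module.End.mul_apply, ef_apply hrel, ih, sl2_h_fpow hrel huh]
    rw [map_smul, ← Module.End.mul_apply f (f^k), ← pow_succ']
    match_scalars; push_cast; ring

theorem sl2_epow_fpow_zero (hrel : Sl2Rel e h f) (hue : e u = 0) (huh : h u = μ • u) :
    ∀ j s : ℕ, j < s → (e^s) ((f^j) u) = 0 := by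
  intro j
  induction j with
  | zero =>
    intro s hs
    obtain ⟨t, rfl⟩ := Nat.exists_eq_add_of_lt hs
    rw [pow_zero, Module.End.one_apply, zero_add, pow_succ, Module.End.mul_apply, hue, map_zero]
  | succ j ih =>
    intro s hs
    obtain ⟨t, rfl⟩ := Nat.exists_eq_add_of_lt hs
    rw [pow_succ, Module.End.mul_apply, sl2_e_fpow hrel hue huh, map_smul,
      ih _ (by omega), smul_zero]

theorem sl2_epow_fpow (hrel : Sl2Rel e h f) (hue : e u = 0) (huh : h u = μ • u)
    {n : ℕ} (hn : μ = (n:K)) :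
    ∀ j, j ≤ n → ∃ c : K, c ≠ 0 ∧ (e^j) ((f^j) u) = c • u := by
  intro j
  induction j with
  | zero => exact fun _ => ⟨1, one_ne_zero, by simp⟩
  | succ j ih =>
    intro hj
    obtain ⟨c, hc, hcu⟩ := ih (by omega)
    refine ⟨((j:K)+1) * (μ - (j:K)) * c, ?_, ?_⟩
    · apply mul_ne_zero (mul_ne_zero ?_ ?_) hc
      · exact Nat.cast_add_one_ne_zero j
      · rw [hn, sub_ne_zero]
        exact fun hc' => by exact_mod_cast absurd (Nat.cast_injective hc') (by omega)
    · rw [pow_succ, Module.End.mul_apply, sl2_e_fpow hrel hue huh, map_smul, hcu,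
        smul_smul, mul_assoc]

theorem sl2_fpow_top [FiniteDimensional K M] (hrel : Sl2Rel e h f) (hu : u ≠ 0)
    (hue : e u = 0) (huh : h u = μ • u) {n : ℕ} (hn : μ = (n:K)) :
    (f^(n+1)) u = 0 ∧ ∀ k, k ≤ n → (f^k) u ≠ 0 := by
  have hex : ∃ N, (f^N) u = 0 := by
    by_contra hc
    push_neg at hc
    have hind : LinearIndependent K (fun k : ℕ => (f^k) u) := by
      apply Module.End.eigenvectors_linearIndependent' h (fun k : ℕ => μ - 2*(k:K)) ?_ _
        (fun k => ⟨Module.End.mem_eigenspace_iff.2 (sl2_h_fpow hrel huh k), hc k⟩)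
      intro j k hjk
      simp only [sub_right_inj] at hjk
      have := mul_left_cancel₀ (two_ne_zero (α := K)) hjk
      exact_mod_cast this
    exact Module.Finite.not_linearIndependent_of_infinite (ι := ℕ)
      (v := fun k : ℕ => (f^k) u) hind
  classical
  obtain ⟨N, hN, hmin⟩ : ∃ N, (f^N) u = 0 ∧ ∀ k, k < N → (f^k) u ≠ 0 :=
    ⟨Nat.find hex, Nat.find_spec hex, fun k hk => Nat.find_min hex hk⟩
  have hN0 : N ≠ 0 := by
    intro h0
    rw [h0, pow_zero, Module.End.one_apply] at hN
    exact hu hN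
  obtain ⟨P, rfl⟩ : ∃ P, N = P + 1 := ⟨N - 1, by omega⟩
  have h1 : e ((f^(P+1)) u) = 0 := by rw [hN, map_zero]
  rw [sl2_e_fpow hrel hue huh] at h1
  have h2 : ((P:K)+1) * (μ - (P:K)) = 0 := by
    by_contra hc
    exact hmin P (by omega) (by simpa [smul_eq_zero, hc] using h1)
  have h3 : μ = (P:K) := by
    rcases mul_eq_zero.mp h2 with h4 | h4
    · exact absurd h4 (Nat.cast_add_one_ne_zero P)
    · exact sub_eq_zero.mp h4
  have hnP : n = P := by
    rw [hn] at h3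
    exact_mod_cast h3
  subst hnP
  exact ⟨hN, fun k hk => hmin k (by omega)⟩

/-- The span of the string through a highest weight vector is sl2-invariant. -/
theorem sl2_span_inv (hrel : Sl2Rel e h f) (hue : e u = 0) {n : ℕ}
    (huh : h u = (n:K) • u) (htop : (f^(n+1)) u = 0) :
    Sl2Inv e h f (Submodule.span K (Set.range fun k : Fin (n+1) => (f^(k:ℕ)) u)) := by
  set S := Submodule.span K (Set.range fun k : Fin (n+1) => (f^(k:ℕ)) u) with hS
  have hgen : ∀ k : Fin (n+1), (f^(k:ℕ)) u ∈ S := fun k =>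
    Submodule.subset_span (Set.mem_range_self k)
  have inv_e : S ≤ Submodule.comap e S := by
    conv_lhs => rw [hS]
    apply Submodule.span_le.2
    rintro _ ⟨k, rfl⟩
    simp only [SetLike.mem_coe, Submodule.mem_comap]
    rcases k with ⟨k, hk⟩
    match k with
    | 0 => simpa [hue] using Submodule.zero_mem S
    | (j+1) =>
      rw [sl2_e_fpow hrel hue huh]
      exact Submodule.smul_mem _ _ (hgen ⟨j, by omega⟩)
  have inv_h : S ≤ Submodule.comap h S := by
    conv_lhs => rw [hS]
    apply Submodule.span_le.2
    rintro _ ⟨k, rfl⟩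
    simp only [SetLike.mem_coe, Submodule.mem_comap]
    rw [sl2_h_fpow hrel huh]
    exact Submodule.smul_mem _ _ (hgen k)
  have inv_f : S ≤ Submodule.comap f S := by
    conv_lhs => rw [hS]
    apply Submodule.span_le.2
    rintro _ ⟨k, rfl⟩
    simp only [SetLike.mem_coe, Submodule.mem_comap]
    rcases k with ⟨k, hk2⟩
    rw [← Module.End.mul_apply f (f^k), ← pow_succ']
    rcases Nat.lt_or_ge k n with hlt | hge
    · exact hgen ⟨k+1, by omega⟩
    · have : k = n := by omega
      subst this
      rw [htop]
      exact Submodule.zero_mem S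
  exact ⟨fun x hx => inv_e hx, fun x hx => inv_h hx, fun x hx => inv_f hx⟩

/-- The vectors f^k u, k = 0..n, form a basis of an irreducible module. -/
theorem sl2_basis [FiniteDimensional K M] (hrel : Sl2Rel e h f)
    (hirr : ∀ U : Submodule K M, Sl2Inv e h f U → U = ⊥ ∨ U = ⊤)
    (hu : u ≠ 0) (hue : e u = 0) {n : ℕ} (huh : h u = (n:K) • u) :
    ∃ bas : Module.Basis (Fin (n+1)) K M, ∀ k : Fin (n+1), bas k = (f^(k:ℕ)) u := by
  obtain ⟨htop, hne⟩ := sl2_fpow_top hrel hu hue huh rfl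
  have hind : LinearIndependent K (fun k : Fin (n+1) => (f^(k:ℕ)) u) := by
    apply Module.End.eigenvectors_linearIndependent' h
      (fun k : Fin (n+1) => (n:K) - 2*((k:ℕ):K)) ?_ _
      (fun k => ⟨Module.End.mem_eigenspace_iff.2 (sl2_h_fpow hrel huh _),
        hne _ (by omega)⟩)
    intro j k hjk
    simp only [sub_right_inj] at hjk
    have := mul_left_cancel₀ (two_ne_zero (α := K)) hjk
    have : (j:ℕ) = (k:ℕ) := by exact_mod_cast this
    exact Fin.ext this
  have hspan : Submodule.span K (Set.range fun k : Fin (n+1) => (f^(k:ℕ)) u) = ⊤ := by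
    set S := Submodule.span K (Set.range fun k : Fin (n+1) => (f^(k:ℕ)) u) with hS
    rcases hirr S (sl2_span_inv hrel hue huh htop) with hbot | htop'
    · exfalso
      have : u ∈ S := by
        exact Submodule.subset_span ⟨⟨0, by omega⟩, by simp⟩
      rw [hbot] at this
      exact hu (by simpa using this)
    · exact htop'
  exact ⟨Module.Basis.mk hind hspan.ge, fun k => Module.Basis.mk_apply hind hspan.ge k⟩

theorem pow_mem_of_inv {g : Module.End K M} {U' : Submodule K M}
    (hg : ∀ x ∈ U', g x ∈ U') : ∀ (s : ℕ), ∀ x ∈ U', (g^s) x ∈ U' := by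
  intro s
  induction s with
  | zero => intro x hx; simpa using hx
  | succ s ih =>
    intro x hx
    rw [pow_succ, Module.End.mul_apply]
    exact ih _ (hg x hx)

/-- Any invariant submodule of the string span is trivial or everything. -/
theorem sl2_span_irred [FiniteDimensional K M] (hrel : Sl2Rel e h f)
    (hu : u ≠ 0) (hue : e u = 0) {n : ℕ} (huh : h u = (n:K) • u)
    (U' : Submodule K M)
    (hle : U' ≤ Submodule.span K (Set.range fun k : Fin (n+1) => (f^(k:ℕ)) u))
    (hinv : Sl2Inv e h f U') :
    U' = ⊥ ∨ U' = Submodule.span K (Set.range fun k : Fin (n+1) => (f^(k:ℕ)) u) := by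
  classical
  by_cases hbot : U' = ⊥
  · exact Or.inl hbot
  right
  obtain ⟨x, hxU, hx0⟩ := (Submodule.ne_bot_iff U').1 hbot
  obtain ⟨d, hd⟩ := (Submodule.mem_span_range_iff_exists_fun K).mp (hle hxU)
  have hdne : ∃ j, d j ≠ 0 := by
    by_contra hc
    push_neg at hc
    apply hx0
    rw [← hd]
    exact Finset.sum_eq_zero fun j _ => by rw [hc j, zero_smul]
  set A := Finset.univ.filter (fun j => d j ≠ 0) with hA
  have hAne : A.Nonempty := by
    obtain ⟨j, hj⟩ := hdne
    exact ⟨j, Finset.mem_filter.2 ⟨Finset.mem_univ j, hj⟩⟩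
  obtain ⟨jm, hjmA, hjmax⟩ := A.exists_max_image (fun j => (j:ℕ)) hAne
  have hdjm : d jm ≠ 0 := (Finset.mem_filter.1 hjmA).2
  obtain ⟨c, hc0, hcu⟩ := sl2_epow_fpow hrel hue huh rfl (jm:ℕ) (Nat.lt_succ_iff.mp jm.isLt)
  have hiter : (e^(jm:ℕ)) x ∈ U' := pow_mem_of_inv hinv.1 _ x hxU
  have hval : (e^(jm:ℕ)) x = (d jm * c) • u := by
    rw [← hd, map_sum]
    rw [Finset.sum_eq_single jm]
    · rw [map_smul, hcu, smul_smul]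
    · intro j _ hj
      by_cases hdj : d j = 0
      · rw [hdj, zero_smul, map_zero]
      · have hjA : j ∈ A := Finset.mem_filter.2 ⟨Finset.mem_univ j, hdj⟩
        have hjlt : (j:ℕ) < (jm:ℕ) :=
          lt_of_le_of_ne (hjmax j hjA) (fun hc' => hj (Fin.ext hc'))
        rw [map_smul, sl2_epow_fpow_zero hrel hue huh _ _ hjlt, smul_zero]
    · intro hjm
      exact absurd (Finset.mem_univ jm) hjm
  have humem : u ∈ U' := by
    rw [hval] at hiter
    exact (Submodule.smul_mem_iff U' (mul_ne_zero hdjm hc0)).1 hiter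
  have hfj : ∀ j : ℕ, (f^j) u ∈ U' := fun j => pow_mem_of_inv hinv.2.2 j u humem
  refine le_antisymm hle (Submodule.span_le.2 ?_)
  rintro _ ⟨j, rfl⟩
  exact hfj (j:ℕ)

/-- Linear independence of the union of the f-strings through highest weight
vectors of pairwise distinct weights. -/
theorem sl2_strings_li [FiniteDimensional K M] (hrel : Sl2Rel e h f)
    {m : ℕ} {n : Fin (m+1) → ℕ} {uu : Fin (m+1) → M}
    (hne : ∀ i, uu i ≠ 0) (hue : ∀ i, e (uu i) = 0)
    (huh : ∀ i, h (uu i) = ((n i : ℕ):K) • uu i)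
    (hinj : ∀ i i' : Fin (m+1), n i = n i' → i = i') :
    LinearIndependent K (fun p : Σ i : Fin (m+1), Fin (n i + 1) => (f^((p.2:ℕ))) (uu p.1)) := by
  classical
  rw [linearIndependent_iff']
  intro s g hsum p0 hp0
  by_contra hg0
  set A := s.filter (fun p => g p ≠ 0) with hA
  have hAne : A.Nonempty := ⟨p0, Finset.mem_filter.2 ⟨hp0, hg0⟩⟩
  obtain ⟨pm, hpmA, hpmax⟩ := A.exists_max_image (fun p => (p.2:ℕ)) hAne
  have hgpm : g pm ≠ 0 := (Finset.mem_filter.1 hpmA).2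
  have hpm_s : pm ∈ s := (Finset.mem_filter.1 hpmA).1
  obtain ⟨c, hc0, hcu⟩ := sl2_epow_fpow hrel (hue pm.1) (huh pm.1) rfl (pm.2:ℕ) (Nat.lt_succ_iff.mp pm.2.isLt)
  have hsum2 : ∑ p ∈ s, g p • (e^(pm.2:ℕ)) ((f^((p.2:ℕ))) (uu p.1)) = 0 := by
    have := congrArg (fun z => (e^(pm.2:ℕ)) z) hsum
    simpa [map_sum, map_smul] using this
  rw [← Finset.add_sum_erase _ _ hpm_s, hcu] at hsum2
  set μ0 : K := ((n pm.1 : ℕ):K) with hμ0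
  have hz1 : (g pm * c) • uu pm.1 ∈ Module.End.eigenspace h μ0 :=
    Submodule.smul_mem _ _ (Module.End.mem_eigenspace_iff.2 (huh pm.1))
  have hz2 : (g pm * c) • uu pm.1 ∈
      ⨆ (ν : K) (_ : ν ≠ μ0), Module.End.eigenspace h ν := by
    have heq : (g pm * c) • uu pm.1
        = -∑ p ∈ s.erase pm, g p • (e^(pm.2:ℕ)) ((f^((p.2:ℕ))) (uu p.1)) := by
      rw [← smul_smul]
      exact eq_neg_of_add_eq_zero_left hsum2
    rw [heq]
    apply neg_mem
    apply Submodule.sum_mem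
    intro p hp
    have hps : p ∈ s := (Finset.mem_erase.1 hp).2
    have hpne : p ≠ pm := (Finset.mem_erase.1 hp).1
    by_cases hgp : g p = 0
    · rw [hgp, zero_smul]; exact zero_mem _
    have hpA : p ∈ A := Finset.mem_filter.2 ⟨hps, hgp⟩
    have hj : (p.2:ℕ) ≤ (pm.2:ℕ) := hpmax p hpA
    rcases lt_or_eq_of_le hj with hlt | hjeq
    · rw [sl2_epow_fpow_zero hrel (hue p.1) (huh p.1) _ _ hlt, smul_zero]
      exact zero_mem _
    · have hi : p.1 ≠ pm.1 := by
        intro hii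
        apply hpne
        rcases p with ⟨pi, pj⟩
        rcases pm with ⟨qi, qj⟩
        simp only at hii
        subst hii
        simp only at hjeq
        exact congrArg _ (Fin.ext hjeq)
      obtain ⟨c', hc'0, hc'u⟩ := sl2_epow_fpow hrel (hue p.1) (huh p.1) rfl (p.2:ℕ) (Nat.lt_succ_iff.mp p.2.isLt)
      rw [← hjeq, hc'u]
      apply Submodule.mem_iSup_of_mem (((n p.1 : ℕ)):K)
      have hνne : ((n p.1 : ℕ):K) ≠ μ0 := by
        rw [hμ0]
        intro hcast
        have : n p.1 = n pm.1 := by exact_mod_cast hcast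
        exact hi (hinj _ _ this)
      apply Submodule.mem_iSup_of_mem hνne
      exact Submodule.smul_mem _ _
        (Submodule.smul_mem _ _ (Module.End.mem_eigenspace_iff.2 (huh p.1)))
  have hdis := (Module.End.eigenspaces_iSupIndep h) μ0
  have hz0 : (g pm * c) • uu pm.1 = 0 := by
    have := Submodule.disjoint_def.1 hdis _ hz1 hz2
    exact this
  rcases smul_eq_zero.1 hz0 with hz | hz
  · exact (mul_ne_zero hgpm hc0) hz
  · exact hne pm.1 hz

end General

noncomputable def cgc (K : Type*) [Field K] (a b i : ℕ) : ℕ → K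
  | 0 => 1
  | k+1 => (-(((i:K)-(k:K)) * ((b:K)+1-(i:K)+(k:K))) / (((k:K)+1)*((a:K)-(k:K)))) * cgc K a b i k

theorem cgc_rec (K : Type*) [Field K] [CharZero K] {a b i k : ℕ} (hk : k < i) (hia : i ≤ a) :
    cgc K a b i (k+1) * (((k:K)+1)*((a:K)-(k:K)))
      = -(cgc K a b i k * (((i:K)-(k:K)) * ((b:K)+1-(i:K)+(k:K)))) := by
  rw [cgc]
  have h1 : ((k:K)+1) ≠ 0 := Nat.cast_add_one_ne_zero k
  have h2 : (a:K)-(k:K) ≠ 0 := by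
    rw [sub_ne_zero]
    exact fun hc => by exact_mod_cast absurd (Nat.cast_injective hc) (by omega)
  field_simp

theorem sum_cg (a b : ℕ) : ∀ M, M ≤ a → M ≤ b →
    ∑ i ∈ Finset.range (M+1), (a + b - 2*i + 1) = (M+1) * (a+b+1-M) := by
  intro M
  induction M with
  | zero => simp
  | succ M ih =>
    intro h1 h2
    rw [Finset.sum_range_succ, ih (by omega) (by omega)]
    obtain ⟨t, ht⟩ : ∃ t, a+b = M + 1 + t + M := ⟨a+b-2*M-1, by omega⟩
    have e1 : a+b+1-M = M+t+2 := by omega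
    have e2 : a+b-2*(M+1)+1 = t := by omega
    have e3 : a+b+1-(M+1) = M+t+1 := by omega
    rw [e1, e2, e3]
    ring

open TensorProduct in
theorem sl2Rel_tensor {K V W : Type*} [Field K]
    [AddCommGroup V] [Module K V] [AddCommGroup W] [Module K W]
    {eV hV fV : Module.End K V} (hrelV : Sl2Rel eV hV fV)
    {eW hW fW : Module.End K W} (hrelW : Sl2Rel eW hW fW) :
    Sl2Rel (LinearMap.rTensor W eV + LinearMap.lTensor V eW)
      (LinearMap.rTensor W hV + LinearMap.lTensor V hW)
      (LinearMap.rTensor W fV + LinearMap.lTensor V fW) := by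
  have he1 := LinearMap.ext_iff.mp hrelV.1
  have he2 := LinearMap.ext_iff.mp hrelW.1
  have hf1 := LinearMap.ext_iff.mp hrelV.2.1
  have hf2 := LinearMap.ext_iff.mp hrelW.2.1
  have hh1 := LinearMap.ext_iff.mp hrelV.2.2
  have hh2 := LinearMap.ext_iff.mp hrelW.2.2
  simp only [LinearMap.sub_apply, Module.End.mul_apply, LinearMap.neg_apply,
    LinearMap.smul_apply, sub_eq_iff_eq_add] at he1 he2 hf1 hf2 hh1 hh2
  refine ⟨?_, ?_, ?_⟩ <;>
  · apply TensorProduct.ext'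
    intro x y
    simp only [LinearMap.sub_apply, Module.End.mul_apply, LinearMap.add_apply,
      LinearMap.neg_apply, LinearMap.smul_apply, LinearMap.rTensor_tmul,
      LinearMap.lTensor_tmul, map_add, he1 x, he2 y, hf1 x, hf2 y, hh1 x, hh2 y,
      add_tmul, tmul_add, neg_tmul, tmul_neg, smul_tmul', tmul_smul, two_smul]
    abel

theorem zmod2_cases : ∀ x : ZMod 2, x = 0 ∨ x = 1 := by decide

section Parity
variable {M : Type*} [CharZero K] [AddCommGroup M] [Module K M] {e h f : Module.End K M}

theorem parity_fpow
    {V0 V1 : Submodule K M} (hgr : Sl2Grading e h f V0 V1)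
    {v : M} {w1 : ZMod 2} (hv : if w1 = 0 then v ∈ V0 else v ∈ V1) :
    ∀ k : ℕ, (w1 + (k : ZMod 2) = 0 → (f^k) v ∈ V0) ∧
      (w1 + (k : ZMod 2) = 1 → (f^k) v ∈ V1) := by
  intro k
  induction k with
  | zero =>
    constructor
    · intro h0
      simp only [Nat.cast_zero, add_zero] at h0
      rw [pow_zero, Module.End.one_apply]
      rw [if_pos h0] at hv
      exact hv
    · intro h1
      simp only [Nat.cast_zero, add_zero] at h1
      rw [pow_zero, Module.End.one_apply]
      rw [if_neg (by rw [h1]; decide)] at hv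
      exact hv
  | succ k ih =>
    have hstep : (f^(k+1)) v = f ((f^k) v) := by rw [pow_succ', Module.End.mul_apply]
    constructor
    · intro h0
      have : w1 + (k : ZMod 2) = 1 := by
        push_cast at h0
        rcases zmod2_cases (w1 + (k:ZMod 2)) with hc | hc
        · rw [← add_assoc, hc] at h0; exact absurd h0 (by decide)
        · exact hc
      rw [hstep]
      exact hgr.2.2.2.2.2.2 _ (ih.2 this)
    · intro h1
      have : w1 + (k : ZMod 2) = 0 := by
        push_cast at h1
        rcases zmod2_cases (w1 + (k:ZMod 2)) with hc | hc
        · exact hc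
        · rw [← add_assoc, hc] at h1; exact absurd h1 (by decide)
      rw [hstep]
      exact hgr.2.2.2.2.2.1 _ (ih.1 this)

end Parity

open TensorProduct in
/-- Graded Clebsch-Gordan rule: V_{λ1}^{w1} ⊗ V_{λ2}^{w2} decomposes as the
direct sum, over i = 0, ..., min(λ1,λ2), of irreducible graded subrepresentations with
highest weight λ1+λ2-2i and highest-weight-vector parity w1+w2+i. -/
theorem stmt11 {K V W : Type*} [Field K] [CharZero K]
    [AddCommGroup V] [Module K V] [FiniteDimensional K V] [Nontrivial V]
    [AddCommGroup W] [Module K W] [FiniteDimensional K W] [Nontrivial W]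
    (eV hV fV : Module.End K V) (hrelV : Sl2Rel eV hV fV)
    (V0 V1 : Submodule K V) (hgrV : Sl2Grading eV hV fV V0 V1)
    (hirrV : ∀ U : Submodule K V, Sl2Inv eV hV fV U → U = ⊥ ∨ U = ⊤)
    (lam1 : ℕ) (w1 : ZMod 2)
    (v : V) (hv : v ≠ 0) (hve : eV v = 0) (hvh : hV v = (lam1 : K) • v)
    (hvpar : if w1 = 0 then v ∈ V0 else v ∈ V1)
    (eW hW fW : Module.End K W) (hrelW : Sl2Rel eW hW fW)
    (W0 W1 : Submodule K W) (hgrW : Sl2Grading eW hW fW W0 W1)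
    (hirrW : ∀ U : Submodule K W, Sl2Inv eW hW fW U → U = ⊥ ∨ U = ⊤)
    (lam2 : ℕ) (w2 : ZMod 2)
    (w : W) (hw : w ≠ 0) (hwe : eW w = 0) (hwh : hW w = (lam2 : K) • w)
    (hwpar : if w2 = 0 then w ∈ W0 else w ∈ W1)
    -- the sl2-action on the tensor product
    (eT hT fT : Module.End K (V ⊗[K] W))
    (heT : eT = LinearMap.rTensor W eV + LinearMap.lTensor V eW)
    (hhT : hT = LinearMap.rTensor W hV + LinearMap.lTensor V hW)
    (hfT : fT = LinearMap.rTensor W fV + LinearMap.lTensor V fW)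
    -- the induced grading on the tensor product
    (TE TO : Submodule K (V ⊗[K] W))
    (hTE : TE = LinearMap.range (TensorProduct.map V0.subtype W0.subtype) ⊔
                LinearMap.range (TensorProduct.map V1.subtype W1.subtype))
    (hTO : TO = LinearMap.range (TensorProduct.map V0.subtype W1.subtype) ⊔
                LinearMap.range (TensorProduct.map V1.subtype W0.subtype)) :
    ∃ U : Fin (min lam1 lam2 + 1) → Submodule K (V ⊗[K] W),
      iSupIndep U ∧ (⨆ i, U i) = ⊤ ∧
      ∀ i : Fin (min lam1 lam2 + 1),
        Sl2Inv eT hT fT (U i) ∧ Sl2GradedSub TE TO (U i) ∧ U i ≠ ⊥ ∧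
        (∀ U' : Submodule K (V ⊗[K] W), U' ≤ U i → Sl2Inv eT hT fT U' →
          Sl2GradedSub TE TO U' → U' = ⊥ ∨ U' = U i) ∧
        ∃ u ∈ U i, u ≠ 0 ∧ eT u = 0 ∧
          hT u = ((lam1 + lam2 - 2 * (i : ℕ) : ℕ) : K) • u ∧
          (if w1 + w2 + ((i : ℕ) : ZMod 2) = 0 then u ∈ TE else u ∈ TO) := by
  classical
  have hrelT : Sl2Rel eT hT fT := by
    rw [heT, hhT, hfT]; exact sl2Rel_tensor hrelV hrelW
  have eT_tmul : ∀ (x : V) (y : W), eT (x ⊗ₜ[K] y) = eV x ⊗ₜ[K] y + x ⊗ₜ[K] eW y := by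
    intro x y; rw [heT]; simp
  have hT_tmul : ∀ (x : V) (y : W), hT (x ⊗ₜ[K] y) = hV x ⊗ₜ[K] y + x ⊗ₜ[K] hW y := by
    intro x y; rw [hhT]; simp
  have fT_tmul : ∀ (x : V) (y : W), fT (x ⊗ₜ[K] y) = fV x ⊗ₜ[K] y + x ⊗ₜ[K] fW y := by
    intro x y; rw [hfT]; simp
  -- bases of V and W
  obtain ⟨bV, hbV⟩ := sl2_basis hrelV hirrV hv hve hvh
  obtain ⟨bW, hbW⟩ := sl2_basis hrelW hirrW hw hwe hwh
  set bT := Module.Basis.tensorProduct bV bW with hbT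
  have finrankT : Module.finrank K (V ⊗[K] W) = (lam1+1) * (lam2+1) := by
    rw [Module.finrank_eq_card_basis bT]
    simp
  set m := min lam1 lam2 with hm
  -- the highest weight vectors of the tensor product
  set uvec : ℕ → V ⊗[K] W := fun i =>
    ∑ k ∈ Finset.range (i+1), cgc K lam1 lam2 i k • ((fV^k) v ⊗ₜ[K] (fW^(i-k)) w) with huvec
  -- hT eigenvalue
  have huvec_eig : ∀ i : ℕ, i ≤ lam2 →
      hT (uvec i) = ((lam1:K)+(lam2:K)-2*(i:K)) • uvec i := by
    intro i hi
    rw [huvec]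
    simp only
    rw [map_sum, Finset.smul_sum]
    apply Finset.sum_congr rfl
    intro k hk
    rw [Finset.mem_range] at hk
    rw [map_smul, hT_tmul, sl2_h_fpow hrelV hvh, sl2_h_fpow hrelW hwh,
      ← smul_tmul', tmul_smul]
    have hik : ((i-k:ℕ):K) = (i:K)-(k:K) := by
      rw [Nat.cast_sub (by omega)]
    rw [hik]
    match_scalars <;> ring
  -- killed by eT
  have huvec_e : ∀ i : ℕ, i ≤ lam1 → i ≤ lam2 → eT (uvec i) = 0 := by
    intro i hia hib
    have key : ∀ k ∈ Finset.range i,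
        cgc K lam1 lam2 i (k+1) • ((eV ((fV^(k+1)) v)) ⊗ₜ[K] (fW^(i-(k+1))) w)
          + cgc K lam1 lam2 i k • ((fV^k) v ⊗ₜ[K] (eW ((fW^(i-k)) w))) = 0 := by
      intro k hk
      rw [Finset.mem_range] at hk
      have h1 : eV ((fV^(k+1)) v) = (((k:K)+1) * ((lam1:K) - (k:K))) • (fV^k) v :=
        sl2_e_fpow hrelV hve hvh k
      have h2 : i - k = (i - (k+1)) + 1 := by omega
      have h3 : eW ((fW^(i-k)) w)
          = ((((i-(k+1):ℕ):K)+1) * ((lam2:K) - ((i-(k+1):ℕ):K))) • (fW^(i-(k+1))) w := by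
        rw [h2]; exact sl2_e_fpow hrelW hwe hwh _
      rw [h1, h3, ← smul_tmul', tmul_smul, smul_smul, smul_smul, ← add_smul]
      have hcast : ((i-(k+1):ℕ):K) = (i:K)-(k:K)-1 := by
        rw [Nat.cast_sub (by omega)]; push_cast; ring
      rw [hcast]
      have hrec := cgc_rec K (a := lam1) (b := lam2) hk hia
      have hcoef : cgc K lam1 lam2 i (k+1) * (((k:K)+1) * ((lam1:K) - (k:K)))
          + cgc K lam1 lam2 i k * (((i:K)-(k:K)-1+1) * ((lam2:K) - ((i:K)-(k:K)-1))) = 0 := by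
        linear_combination hrec
      rw [hcoef, zero_smul]
    have expand : eT (uvec i)
        = (∑ k ∈ Finset.range (i+1), cgc K lam1 lam2 i k • ((eV ((fV^k) v)) ⊗ₜ[K] (fW^(i-k)) w))
          + ∑ k ∈ Finset.range (i+1), cgc K lam1 lam2 i k • ((fV^k) v ⊗ₜ[K] (eW ((fW^(i-k)) w))) := by
      rw [huvec]
      simp only
      rw [map_sum, ← Finset.sum_add_distrib]
      apply Finset.sum_congr rfl
      intro k hk
      rw [map_smul, eT_tmul, smul_add]
    rw [expand, Finset.sum_range_succ' _ i, Finset.sum_range_succ _ i]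
    have hz1 : cgc K lam1 lam2 i 0 • ((eV ((fV^0) v)) ⊗ₜ[K] (fW^(i-0)) w) = 0 := by
      rw [pow_zero, Module.End.one_apply, hve, TensorProduct.zero_tmul, smul_zero]
    have hz2 : cgc K lam1 lam2 i i • ((fV^i) v ⊗ₜ[K] (eW ((fW^(i-i)) w))) = 0 := by
      rw [Nat.sub_self, pow_zero, Module.End.one_apply, hwe, TensorProduct.tmul_zero, smul_zero]
    rw [hz1, hz2, add_zero, add_zero, ← Finset.sum_add_distrib]
    exact Finset.sum_eq_zero key
  -- nonzero
  have huvec_ne : ∀ i : ℕ, i ≤ lam1 → i ≤ lam2 → uvec i ≠ 0 := by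
    intro i hia hib h0
    have hfam : LinearIndependent K
        (fun k : Fin (i+1) => (fV^(k:ℕ)) v ⊗ₜ[K] (fW^(i-(k:ℕ))) w) := by
      have hinj : Function.Injective (fun k : Fin (i+1) =>
          ((⟨(k:ℕ), by omega⟩ : Fin (lam1+1)), (⟨i-(k:ℕ), by omega⟩ : Fin (lam2+1)))) := by
        intro p q hpq
        simp only [Prod.mk.injEq, Fin.mk.injEq] at hpq
        exact Fin.ext hpq.1
      have hli := (bT.linearIndependent).comp _ hinj
      convert hli using 1
      funext k
      simp only [Function.comp_apply, hbT, Module.Basis.tensorProduct_apply, hbV, hbW]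
      rfl
    have hall : ∀ k : Fin (i+1), cgc K lam1 lam2 i (k:ℕ) = 0 := by
      apply Fintype.linearIndependent_iff.mp hfam (fun k : Fin (i+1) => cgc K lam1 lam2 i (k:ℕ))
      rw [Fin.sum_univ_eq_sum_range
        (fun k => cgc K lam1 lam2 i k • ((fV^k) v ⊗ₜ[K] (fW^(i-k)) w)) (i+1)]
      exact h0
    have := hall ⟨0, by omega⟩
    rw [cgc] at this
    exact one_ne_zero this
  -- cast of the weight
  have hcastw : ∀ i : ℕ, i ≤ lam1 → i ≤ lam2 →
      ((lam1 + lam2 - 2*i : ℕ) : K) = (lam1:K)+(lam2:K)-2*(i:K) := by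
    intro i hia hib
    rw [Nat.cast_sub (by omega)]
    push_cast; ring
  have huvec_eig' : ∀ i : ℕ, i ≤ lam1 → i ≤ lam2 →
      hT (uvec i) = ((lam1 + lam2 - 2*i : ℕ) : K) • uvec i := by
    intro i hia hib
    rw [hcastw i hia hib]
    exact huvec_eig i hib
  -- string data
  have hstring : ∀ i : ℕ, i ≤ lam1 → i ≤ lam2 →
      (fT^(lam1+lam2-2*i+1)) (uvec i) = 0 ∧
        ∀ k, k ≤ lam1+lam2-2*i → (fT^k) (uvec i) ≠ 0 := by
    intro i hia hib
    exact sl2_fpow_top hrelT (huvec_ne i hia hib) (huvec_e i hia hib)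
      (huvec_eig' i hia hib) rfl
  -- the family of submodules
  set nd : ℕ → ℕ := fun i => lam1 + lam2 - 2*i with hnd
  set U : Fin (m+1) → Submodule K (V ⊗[K] W) := fun i =>
    Submodule.span K (Set.range fun j : Fin (nd (i:ℕ) + 1) => (fT^((j:ℕ))) (uvec (i:ℕ)))
    with hU
  have him : ∀ i : Fin (m+1), (i:ℕ) ≤ lam1 ∧ (i:ℕ) ≤ lam2 := by
    intro i
    have := i.isLt
    omega
  -- linear independence of the full family
  have hFli : LinearIndependent K
      (fun p : Σ i : Fin (m+1), Fin (nd (i:ℕ) + 1) => (fT^((p.2:ℕ))) (uvec (p.1:ℕ))) := by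
    apply sl2_strings_li hrelT (n := fun i : Fin (m+1) => nd (i:ℕ))
      (uu := fun i : Fin (m+1) => uvec (i:ℕ))
    · exact fun i => huvec_ne _ (him i).1 (him i).2
    · exact fun i => huvec_e _ (him i).1 (him i).2
    · exact fun i => huvec_eig' _ (him i).1 (him i).2
    · intro i i' hnn
      have h1 := (him i).1; have h2 := (him i).2
      have h3 := (him i').1; have h4 := (him i').2
      rw [hnd] at hnn
      simp only at hnn
      have : (i:ℕ) = (i':ℕ) := by omega
      exact Fin.ext this
  -- cardinality
  have hcard : Fintype.card (Σ i : Fin (m+1), Fin (nd (i:ℕ)+1)) = (lam1+1)*(lam2+1) := by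
    rw [Fintype.card_sigma]
    simp only [Fintype.card_fin]
    rw [Fin.sum_univ_eq_sum_range (fun i => nd i + 1) (m+1)]
    have := sum_cg lam1 lam2 m (min_le_left _ _) (min_le_right _ _)
    rw [hnd]
    simp only
    rw [this]
    rcases Nat.le_total lam1 lam2 with hle | hle
    · rw [hm, Nat.min_eq_left hle]
      have : lam1 + lam2 + 1 - lam1 = lam2 + 1 := by omega
      rw [this]
    · rw [hm, Nat.min_eq_right hle]
      have : lam1 + lam2 + 1 - lam2 = lam1 + 1 := by omega
      rw [this, Nat.mul_comm]
  -- span is everything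
  have hnonempty : Nonempty (Σ i : Fin (m+1), Fin (nd (i:ℕ)+1)) :=
    ⟨⟨⟨0, by omega⟩, ⟨0, by omega⟩⟩⟩
  have hspanTop : Submodule.span K (Set.range
      (fun p : Σ i : Fin (m+1), Fin (nd (i:ℕ) + 1) => (fT^((p.2:ℕ))) (uvec (p.1:ℕ)))) = ⊤ :=
    hFli.span_eq_top_of_card_eq_finrank (by rw [hcard, finrankT])
  -- U i as image spans
  set F : (Σ i : Fin (m+1), Fin (nd (i:ℕ) + 1)) → V ⊗[K] W :=
    fun p => (fT^((p.2:ℕ))) (uvec (p.1:ℕ)) with hF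
  have hUi : ∀ i : Fin (m+1), U i = Submodule.span K (F '' {p | p.1 = i}) := by
    intro i
    have hset : (Set.range fun j : Fin (nd (i:ℕ)+1) => (fT^((j:ℕ))) (uvec (i:ℕ)))
        = F '' {p | p.1 = i} := by
      ext x
      constructor
      · rintro ⟨j, rfl⟩
        exact ⟨⟨i, j⟩, rfl, rfl⟩
      · rintro ⟨⟨i', j⟩, hi', rfl⟩
        simp only [Set.mem_setOf_eq] at hi'
        subst hi'
        exact ⟨j, rfl⟩
    show Submodule.span K (Set.range fun j : Fin (nd (i:ℕ)+1) => (fT^((j:ℕ))) (uvec (i:ℕ)))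
        = Submodule.span K (F '' {p | p.1 = i})
    rw [hset]
  refine ⟨U, ?_, ?_, ?_⟩
  · -- iSupIndep
    intro i
    have hsup : (⨆ (j) (_ : j ≠ i), U j) = Submodule.span K (F '' {p | p.1 ≠ i}) := by
      simp_rw [hUi, ← Submodule.span_iUnion]
      congr 1
      ext x
      simp only [Set.mem_iUnion, Set.mem_image, Set.mem_setOf_eq]
      constructor
      · rintro ⟨j, hj, p, hp, rfl⟩
        exact ⟨p, by rw [hp]; exact hj, rfl⟩
      · rintro ⟨p, hp, rfl⟩
        exact ⟨p.1, hp, p, rfl, rfl⟩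
    rw [hUi i, hsup]
    apply hFli.disjoint_span_image
    rw [Set.disjoint_left]
    intro p hp hp'
    exact hp' hp
  · -- supremum is top
    have : (⨆ i, U i) = Submodule.span K (F '' Set.univ) := by
      simp_rw [hUi, ← Submodule.span_iUnion]
      congr 1
      ext x
      simp only [Set.mem_iUnion, Set.mem_image, Set.mem_setOf_eq, Set.mem_univ, true_and]
      constructor
      · rintro ⟨j, p, hp, rfl⟩
        exact ⟨p, rfl⟩
      · rintro ⟨p, rfl⟩
        exact ⟨p.1, p, rfl, rfl⟩
    rw [this, Set.image_univ]
    exact hspanTop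
  · -- per-index properties
    intro i
    obtain ⟨hia, hib⟩ := him i
    obtain ⟨htopi, hnei⟩ := hstring (i:ℕ) hia hib
    have hUival : U i = Submodule.span K
        (Set.range fun j : Fin (nd (i:ℕ) + 1) => (fT^((j:ℕ))) (uvec (i:ℕ))) := rfl
    have huv_mem : uvec (i:ℕ) ∈ U i := by
      rw [hUival]
      have : uvec (i:ℕ) = (fT^((0:ℕ))) (uvec (i:ℕ)) := by
        rw [pow_zero, Module.End.one_apply]
      rw [this]
      exact Submodule.subset_span ⟨⟨0, by omega⟩, rfl⟩
    -- parity facts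
    have parV := parity_fpow hgrV hvpar
    have parW := parity_fpow hgrW hwpar
    have memTE00 : ∀ x ∈ V0, ∀ y ∈ W0, x ⊗ₜ[K] y ∈ TE := by
      intro x hx y hy
      rw [hTE]
      exact Submodule.mem_sup_left
        ⟨(⟨x,hx⟩ : V0) ⊗ₜ[K] (⟨y,hy⟩ : W0), by simp [TensorProduct.map_tmul]⟩
    have memTE11 : ∀ x ∈ V1, ∀ y ∈ W1, x ⊗ₜ[K] y ∈ TE := by
      intro x hx y hy
      rw [hTE]
      exact Submodule.mem_sup_right
        ⟨(⟨x,hx⟩ : V1) ⊗ₜ[K] (⟨y,hy⟩ : W1), by simp [TensorProduct.map_tmul]⟩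
    have memTO01 : ∀ x ∈ V0, ∀ y ∈ W1, x ⊗ₜ[K] y ∈ TO := by
      intro x hx y hy
      rw [hTO]
      exact Submodule.mem_sup_left
        ⟨(⟨x,hx⟩ : V0) ⊗ₜ[K] (⟨y,hy⟩ : W1), by simp [TensorProduct.map_tmul]⟩
    have memTO10 : ∀ x ∈ V1, ∀ y ∈ W0, x ⊗ₜ[K] y ∈ TO := by
      intro x hx y hy
      rw [hTO]
      exact Submodule.mem_sup_right
        ⟨(⟨x,hx⟩ : V1) ⊗ₜ[K] (⟨y,hy⟩ : W0), by simp [TensorProduct.map_tmul]⟩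
    -- fT swaps the parities
    have hswap : ∀ (P : Submodule K V) (Q : Submodule K W) (P' : Submodule K V)
        (Q' : Submodule K W) (R : Submodule K (V ⊗[K] W))
        (hP : ∀ x ∈ P, fV x ∈ P') (hQ : ∀ y ∈ Q, fW y ∈ Q')
        (hRP : ∀ x ∈ P', ∀ y ∈ Q, x ⊗ₜ[K] y ∈ R)
        (hRQ : ∀ x ∈ P, ∀ y ∈ Q', x ⊗ₜ[K] y ∈ R) (t : P ⊗[K] Q),
        fT (TensorProduct.map P.subtype Q.subtype t) ∈ R := by
      intro P Q P' Q' R hP hQ hRP hRQ t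
      induction t with
      | zero => simp only [map_zero]; exact zero_mem R
      | tmul x y =>
        rw [TensorProduct.map_tmul, fT_tmul]
        exact add_mem (hRP _ (hP _ x.2) _ y.2) (hRQ _ x.2 _ (hQ _ y.2))
      | add s1 s2 ih1 ih2 =>
        rw [map_add, map_add]
        exact add_mem ih1 ih2
    have swapTE : ∀ t ∈ TE, fT t ∈ TO := by
      intro t ht
      rw [hTE] at ht
      rcases Submodule.mem_sup.1 ht with ⟨t1, ht1, t2, ht2, rfl⟩
      rw [map_add]
      apply add_mem
      · rcases ht1 with ⟨s, rfl⟩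
        exact hswap V0 W0 V1 W1 TO hgrV.2.2.2.2.2.1 hgrW.2.2.2.2.2.1 memTO10 memTO01 s
      · rcases ht2 with ⟨s, rfl⟩
        exact hswap V1 W1 V0 W0 TO hgrV.2.2.2.2.2.2 hgrW.2.2.2.2.2.2 memTO01 memTO10 s
    have swapTO : ∀ t ∈ TO, fT t ∈ TE := by
      intro t ht
      rw [hTO] at ht
      rcases Submodule.mem_sup.1 ht with ⟨t1, ht1, t2, ht2, rfl⟩
      rw [map_add]
      apply add_mem
      · rcases ht1 with ⟨s, rfl⟩
        exact hswap V0 W1 V1 W0 TE hgrV.2.2.2.2.2.1 hgrW.2.2.2.2.2.2 memTE11 memTE00 s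
      · rcases ht2 with ⟨s, rfl⟩
        exact hswap V1 W0 V0 W1 TE hgrV.2.2.2.2.2.2 hgrW.2.2.2.2.2.1 memTE00 memTE11 s
    -- parity of the string vectors
    have par_u : ∀ j : ℕ,
        (w1 + w2 + (((i:ℕ)+j : ℕ) : ZMod 2) = 0 → (fT^j) (uvec (i:ℕ)) ∈ TE) ∧
        (w1 + w2 + (((i:ℕ)+j : ℕ) : ZMod 2) = 1 → (fT^j) (uvec (i:ℕ)) ∈ TO) := by
      intro j
      induction j with
      | zero =>
        simp only [Nat.add_zero, pow_zero, Module.End.one_apply]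
        have hterm : ∀ k ∈ Finset.range ((i:ℕ)+1),
            (w1 + w2 + (((i:ℕ)) : ZMod 2) = 0 →
              cgc K lam1 lam2 (i:ℕ) k • ((fV^k) v ⊗ₜ[K] (fW^((i:ℕ)-k)) w) ∈ TE) ∧
            (w1 + w2 + (((i:ℕ)) : ZMod 2) = 1 →
              cgc K lam1 lam2 (i:ℕ) k • ((fV^k) v ⊗ₜ[K] (fW^((i:ℕ)-k)) w) ∈ TO) := by
          intro k hk
          rw [Finset.mem_range] at hk
          have hsum : (w1 + (k : ZMod 2)) + (w2 + (((i:ℕ)-k : ℕ) : ZMod 2))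
              = w1 + w2 + (((i:ℕ)) : ZMod 2) := by
            have : ((k : ℕ) : ZMod 2) + (((i:ℕ)-k : ℕ) : ZMod 2) = (((i:ℕ)) : ZMod 2) := by
              rw [← Nat.cast_add]
              congr 1
              omega
            rw [← this]
            ring
          rcases zmod2_cases (w1 + (k : ZMod 2)) with hx | hx <;>
            rcases zmod2_cases (w2 + (((i:ℕ)-k : ℕ) : ZMod 2)) with hy | hy
          · constructor
            · intro _
              exact Submodule.smul_mem _ _ (memTE00 _ ((parV k).1 hx) _ ((parW _).1 hy))
            · intro hpar
              rw [← hsum, hx, hy] at hpar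
              exact absurd hpar (by decide)
          · constructor
            · intro hpar
              rw [← hsum, hx, hy] at hpar
              exact absurd hpar (by decide)
            · intro _
              exact Submodule.smul_mem _ _ (memTO01 _ ((parV k).1 hx) _ ((parW _).2 hy))
          · constructor
            · intro hpar
              rw [← hsum, hx, hy] at hpar
              exact absurd hpar (by decide)
            · intro _
              exact Submodule.smul_mem _ _ (memTO10 _ ((parV k).2 hx) _ ((parW _).1 hy))
          · constructor
            · intro _
              exact Submodule.smul_mem _ _ (memTE11 _ ((parV k).2 hx) _ ((parW _).2 hy))
            · intro hpar
              rw [← hsum, hx, hy] at hpar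
              exact absurd hpar (by decide)
        constructor
        · intro hpar
          rw [huvec]
          exact Submodule.sum_mem _ (fun k hk => (hterm k hk).1 hpar)
        · intro hpar
          rw [huvec]
          exact Submodule.sum_mem _ (fun k hk => (hterm k hk).2 hpar)
      | succ j ih =>
        have hstep : (fT^(j+1)) (uvec (i:ℕ)) = fT ((fT^j) (uvec (i:ℕ))) := by
          rw [pow_succ', Module.End.mul_apply]
        have hpush : (((i:ℕ)+(j+1) : ℕ) : ZMod 2) = (((i:ℕ)+j : ℕ) : ZMod 2) + 1 := by
          push_cast
          ring
        constructor
        · intro h0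
          have : w1 + w2 + (((i:ℕ)+j : ℕ) : ZMod 2) = 1 := by
            rw [hpush, ← add_assoc] at h0
            rcases zmod2_cases (w1 + w2 + (((i:ℕ)+j : ℕ) : ZMod 2)) with hc | hc
            · rw [hc] at h0; exact absurd h0 (by decide)
            · exact hc
          rw [hstep]
          exact swapTO _ (ih.2 this)
        · intro h1
          have : w1 + w2 + (((i:ℕ)+j : ℕ) : ZMod 2) = 0 := by
            rw [hpush, ← add_assoc] at h1
            rcases zmod2_cases (w1 + w2 + (((i:ℕ)+j : ℕ) : ZMod 2)) with hc | hc
            · exact hc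
            · rw [hc] at h1; exact absurd h1 (by decide)
          rw [hstep]
          exact swapTE _ (ih.1 this)
    refine ⟨?_, ?_, ?_, ?_, ?_⟩
    · -- invariance
      rw [hUival]
      exact sl2_span_inv hrelT (huvec_e _ hia hib) (huvec_eig' _ hia hib) htopi
    · -- gradedness
      rw [Sl2GradedSub]
      apply le_antisymm
      · rw [hUival]
        apply Submodule.span_le.2
        rintro _ ⟨j, rfl⟩
        have hmem : (fT^((j:ℕ))) (uvec (i:ℕ)) ∈ U i := by
          rw [hUival]
          exact Submodule.subset_span ⟨j, rfl⟩
        rcases zmod2_cases (w1 + w2 + (((i:ℕ)+(j:ℕ) : ℕ) : ZMod 2)) with hc | hc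
        · exact Submodule.mem_sup_left (Submodule.mem_inf.2 ⟨hmem, (par_u (j:ℕ)).1 hc⟩)
        · exact Submodule.mem_sup_right (Submodule.mem_inf.2 ⟨hmem, (par_u (j:ℕ)).2 hc⟩)
      · exact sup_le inf_le_left inf_le_left
    · -- nonzero
      intro hbot
      rw [hbot] at huv_mem
      exact huvec_ne _ hia hib (by simpa using huv_mem)
    · -- minimality
      intro U' hle hinv _
      exact sl2_span_irred hrelT (huvec_ne _ hia hib) (huvec_e _ hia hib)
        (huvec_eig' _ hia hib) U' hle hinv
    · -- the highest weight vector
      refine ⟨uvec (i:ℕ), huv_mem, huvec_ne _ hia hib, huvec_e _ hia hib, ?_, ?_⟩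
      · exact huvec_eig' _ hia hib
      · have := par_u 0
        simp only [Nat.add_zero, pow_zero, Module.End.one_apply] at this
        rcases zmod2_cases (w1 + w2 + ((i:ℕ) : ZMod 2)) with hc | hc
        · rw [if_pos hc]
          exact this.1 hc
        · rw [if_neg (by rw [hc]; decide)]
          exact this.2 hc
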